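/- arXiv:1604.05806 — 2 statements merged into one kernel-verified Lean document; each statement's English description precedes it below -/
import Mathlib

section
/- For every integer N ≥ 1, a_{2,N−1}(N+1,x) = (−1)² · 2! · S_{1,1}(N−1) · (x)_{N−1} = 2·(1 + 2 + ⋯ + N)·(x)_{N−1}. -/
open Finset

def genChangheeS : ℕ → ℕ → ℚ
  | 0, _ => 1
  | 1, N => N + 1
  | (j+2), N => ∑ l ∈ Finset.range (N+1), genChangheeS (j+1) l

noncomputable def fallingFactorial (x : ℝ) (n : ℕ) : ℝ := ∏ i ∈ Finset.range n, (x - i)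

noncomputable def aCh : ℕ → ℤ → ℤ → ℝ → ℝ
  | 0, _, _, _ => 0
  | 1, i, j, x => if i = 1 ∧ j = 0 then -1 else if i = 0 ∧ j = 1 then x else 0
  | (N+2), i, j, x =>
      if 0 ≤ i ∧ 0 ≤ j ∧ 1 ≤ i + j ∧ i + j ≤ N + 2 then
        -(N+1 : ℝ) * aCh (N+1) i j x - (i : ℝ) * aCh (N+1) (i-1) j x
          + (x - (j : ℝ) + 1) * aCh (N+1) i (j-1) x
      else 0

lemma aCh_eq_zero (N : ℕ) (i j : ℤ) (x : ℝ) (h : (N:ℤ) < i + j) : aCh N i j x = 0 := by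
  match N with
  | 0 => rfl
  | 1 =>
    simp only [aCh]
    rw [if_neg, if_neg] <;> omega
  | (N+2) =>
    simp only [aCh]
    rw [if_neg]
    push_cast at h ⊢
    omega

lemma aCh_rec (N : ℕ) (i j : ℤ) (x : ℝ)
    (h : 0 ≤ i ∧ 0 ≤ j ∧ 1 ≤ i + j ∧ i + j ≤ N + 2) :
    aCh (N+2) i j x = -(N+1 : ℝ) * aCh (N+1) i j x - (i : ℝ) * aCh (N+1) (i-1) j x
          + (x - (j : ℝ) + 1) * aCh (N+1) i (j-1) x := by
  conv_lhs => rw [aCh]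
  rw [if_pos h]

lemma ff_succ (x : ℝ) (n : ℕ) :
    fallingFactorial x (n+1) = fallingFactorial x n * (x - n) := by
  simp [fallingFactorial, Finset.prod_range_succ]

lemma aCh_diag (N : ℕ) (x : ℝ) : aCh (N+1) 0 ((N:ℤ)+1) x = fallingFactorial x (N+1) := by
  induction N with
  | zero => simp [aCh, fallingFactorial]
  | succ n ih =>
    push_cast
    rw [show n+1+1 = n+2 from rfl, aCh_rec n 0 ((n:ℤ)+1+1) x (by constructor <;> omega)]
    rw [aCh_eq_zero (n+1) 0 ((n:ℤ)+1+1) x (by omega)]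
    rw [show ((n:ℤ)+1+1-1) = (n:ℤ)+1 by ring, ih, ff_succ x (n+1)]
    push_cast
    ring

lemma aCh_one (N : ℕ) (x : ℝ) : aCh (N+1) 1 (N:ℤ) x = -((N:ℝ)+1) * fallingFactorial x N := by
  induction N with
  | zero => simp [aCh, fallingFactorial]
  | succ n ih =>
    rw [show n+1+1 = n+2 from rfl, show ((n+1:ℕ):ℤ) = (n:ℤ)+1 by push_cast; ring,
      aCh_rec n 1 ((n:ℤ)+1) x (by constructor <;> omega)]
    rw [aCh_eq_zero (n+1) 1 ((n:ℤ)+1) x (by omega)]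
    rw [show ((1:ℤ)-1) = 0 by ring, show ((n:ℤ)+1-1) = (n:ℤ) by ring, ih, aCh_diag n x]
    rw [ff_succ x n]
    push_cast
    ring

lemma aCh_two (N : ℕ) (hN : 1 ≤ N) (x : ℝ) :
    aCh (N+1) 2 ((N:ℤ)-1) x = (N:ℝ) * ((N:ℝ)+1) * fallingFactorial x (N-1) := by
  induction N with
  | zero => omega
  | succ n ih =>
    match n, ih with
    | 0, _ =>
      rw [show (0:ℕ)+1+1 = 0+2 from rfl,
        aCh_rec 0 2 (((0+1:ℕ):ℤ)-1) x (by constructor <;> omega)]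
      norm_num [aCh, fallingFactorial]
    | (m+1), ih =>
      have ih' := ih (by omega)
      rw [show m+1+1 = m+2 from rfl] at ih' ⊢
      rw [show (((m+2:ℕ)):ℤ)-1 = (m:ℤ)+1 by push_cast; ring,
        show m+2+1 = (m+1)+2 from rfl,
        aCh_rec (m+1) 2 ((m:ℤ)+1) x (by constructor <;> omega)]
      rw [aCh_eq_zero (m+2) 2 ((m:ℤ)+1) x (by omega)]
      rw [show ((2:ℤ)-1) = 1 by ring, show ((m:ℤ)+1-1) = (m:ℤ) by ring]
      have ih2 : aCh (m+2) 2 (m:ℤ) x = ((m:ℝ)+1)*((m:ℝ)+1+1) * fallingFactorial x m := by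
        push_cast at ih'
        rw [show (m:ℤ)+1-1 = (m:ℤ) by ring] at ih'
        exact ih'
      have h1 : aCh (m+2) 1 ((m:ℤ)+1) x = -((m:ℝ)+1+1) * fallingFactorial x (m+1) := by
        have := aCh_one (m+1) x
        push_cast at this
        exact this
      rw [show m+1+1 = m+2 from rfl] at h1 ⊢
      rw [h1, ih2, show m+2-1 = m+1 from rfl, ff_succ x m]
      push_cast
      ring

lemma gen2 (M : ℕ) : (genChangheeS 2 M : ℝ) = ((M:ℝ)+1)*((M:ℝ)+2)/2 := by
  induction M with
  | zero => norm_num [genChangheeS]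
  | succ k ih =>
    have h : genChangheeS 2 (k+1) = genChangheeS 2 k + genChangheeS 1 (k+1) := by
      show (∑ l ∈ Finset.range (k+1+1), genChangheeS 1 l) = _
      rw [Finset.sum_range_succ]
      rfl
    rw [h]
    push_cast [ih]
    simp only [genChangheeS]
    push_cast
    ring

lemma sum_Icc_id (N : ℕ) : (∑ i ∈ Finset.Icc 1 N, (i : ℝ)) = (N:ℝ) * ((N:ℝ)+1) / 2 := by
  induction N with
  | zero => simp
  | succ k ihk =>
    rw [Finset.sum_Icc_succ_top (by omega), ihk]
    push_cast
    ring

/-- `a_{2,N-1}(N+1,x) = (-1)² · 2! · S_{1,1}(N-1) · (x)_{N-1} = 2·(1 + 2 + ⋯ + N)·(x)_{N-1}`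
for `N ≥ 1`. -/
theorem aCh_two_Nsub (N : ℕ) (hN : 1 ≤ N) (x : ℝ) :
    aCh (N + 1) 2 ((N : ℤ) - 1) x
        = (-1 : ℝ) ^ 2 * (Nat.factorial 2 : ℝ) * (genChangheeS 2 (N - 1) : ℝ) *
            fallingFactorial x (N - 1) ∧
      aCh (N + 1) 2 ((N : ℤ) - 1) x
        = 2 * (∑ i ∈ Finset.Icc 1 N, (i : ℝ)) * fallingFactorial x (N - 1) := by
  have key := aCh_two N hN x
  have hs : (genChangheeS 2 (N - 1) : ℝ) = (N:ℝ) * ((N:ℝ)+1) / 2 := by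
    obtain ⟨m, rfl⟩ : ∃ m, N = m + 1 := ⟨N - 1, by omega⟩
    rw [Nat.add_sub_cancel, gen2 m]
    push_cast
    ring
  have hsum : (∑ i ∈ Finset.Icc 1 N, (i : ℝ)) = (N:ℝ) * ((N:ℝ)+1) / 2 := sum_Icc_id N
  constructor
  · rw [key, hs, show (Nat.factorial 2 : ℝ) = 2 by norm_num [Nat.factorial]]; ring
  · rw [key, hsum]; ring
end

section
/- For all integers N and r with 2 ≤ r ≤ N, a_{r,0}(N+1,x) = (−1)^{N+1} · N! · r! · H_{N,r−1} (as a constant polynomial in x). -/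
open Finset

/-- Generalized harmonic numbers `H_{N,j}`: `H_{N,0} = 1`,
`H_{N,1} = 1 + 1/2 + ⋯ + 1/N`, and `H_{N,j} = ∑_{l=j}^{N} H_{l-1,j-1}/l` for `j ≥ 2`. -/
def genHarmonic : ℕ → ℕ → ℚ
  | _, 0 => 1
  | N, 1 => ∑ i ∈ Finset.range N, (1 : ℚ) / (i + 1)
  | N, (j+2) => ∑ l ∈ Finset.Icc (j+2) N, genHarmonic (l-1) (j+1) / l
termination_by N j => j

lemma genHarmonic_zero (N : ℕ) : genHarmonic N 0 = 1 := by rw [genHarmonic]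

lemma genHarmonic_eq_zero (N j : ℕ) (h1 : 1 ≤ j) (h2 : N < j) : genHarmonic N j = 0 := by
  match j, h1 with
  | 1, _ =>
    have hN : N = 0 := by omega
    subst hN
    rw [genHarmonic]; simp
  | (k+2), _ =>
    rw [genHarmonic, Finset.Icc_eq_empty (by omega)]; simp

lemma genHarmonic_succ (N j : ℕ) (h1 : 1 ≤ j) (h2 : j ≤ N + 1) :
    genHarmonic (N+1) j = genHarmonic N j + genHarmonic N (j-1) / (N+1) := by
  match j with
  | 1 =>
    rw [genHarmonic, genHarmonic, genHarmonic, Finset.sum_range_succ]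
  | (k+2) =>
    rw [show genHarmonic N (k+2) = ∑ l ∈ Finset.Icc (k+2) N, genHarmonic (l-1) (k+1) / l from by rw [genHarmonic]]
    rw [genHarmonic, Finset.sum_Icc_succ_top (by omega : k+2 ≤ N+1)]
    norm_num

lemma aCh_j_neg (M : ℕ) (i : ℤ) (x : ℝ) : aCh M i (-1) x = 0 := by
  match M with
  | 0 => rfl
  | 1 => rw [aCh]; norm_num
  | (K+2) => rw [aCh]; norm_num

lemma aCh_zero_zero (M : ℕ) (x : ℝ) : aCh M 0 0 x = 0 := by
  match M with
  | 0 => rfl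
  | 1 => rw [aCh]; norm_num
  | (K+2) => rw [aCh]; norm_num

lemma aCh_gt (M : ℕ) (i : ℤ) (h : (M : ℤ) < i) (x : ℝ) : aCh M i 0 x = 0 := by
  match M with
  | 0 => rfl
  | 1 =>
    rw [aCh]
    rw [if_neg (by omega), if_neg (by omega)]
  | (K+2) =>
    rw [aCh, if_neg (by push_cast; omega)]

lemma aCh_main (N : ℕ) : ∀ r : ℕ, 1 ≤ r → ∀ x : ℝ,
    aCh (N+1) (r : ℤ) 0 x
      = (-1 : ℝ)^(N+1) * (Nat.factorial N : ℝ) * (Nat.factorial r : ℝ) *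
          (genHarmonic N (r-1) : ℝ) := by
  induction N with
  | zero =>
    intro r hr x
    match r, hr with
    | 1, _ =>
      rw [aCh, if_pos ⟨rfl, rfl⟩, genHarmonic_zero]
      norm_num
    | (k+2), _ =>
      rw [aCh, if_neg (by push_cast; omega), if_neg (by push_cast; omega)]
      rw [show (k+2) - 1 = k+1 from rfl,
        genHarmonic_eq_zero 0 (k+1) (by omega) (by omega)]
      norm_num
  | succ N ih =>
    intro r hr x
    by_cases hle : r ≤ N + 2
    · rw [show ((N:ℕ)+1+1) = N+2 from rfl, aCh,
        if_pos (by refine ⟨by positivity, le_refl _, ?_, ?_⟩ <;> omega)]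
      rw [show (0:ℤ) - 1 = -1 from rfl, aCh_j_neg]
      match r, hr with
      | 1, _ =>
        rw [show ((1:ℕ):ℤ) - 1 = 0 from rfl, aCh_zero_zero, ih 1 (by omega) x]
        rw [genHarmonic_zero, genHarmonic_zero]
        simp only [Nat.factorial_succ, Nat.factorial_one, Nat.factorial_zero]
        push_cast
        ring
      | (k+2), _ =>
        have e1 : ((k+2:ℕ):ℤ) - 1 = ((k+1:ℕ):ℤ) := by push_cast; ring
        rw [e1, ih (k+2) (by omega) x, ih (k+1) (by omega) x]
        rw [show (k+2) - 1 = k+1 from rfl, show (k+1) - 1 = k from rfl]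
        rw [genHarmonic_succ N (k+1) (by omega) (by omega)]
        rw [show (k+1)-1 = k from rfl]
        rw [Nat.factorial_succ N, Nat.factorial_succ (k+1)]
        push_cast
        have hN : ((N:ℝ)+1) ≠ 0 := by positivity
        field_simp
        ring
    · rw [aCh_gt _ _ (by push_cast; omega)]
      rw [genHarmonic_eq_zero (N+1) (r-1) (by omega) (by omega)]
      norm_num


/-- For `2 ≤ r ≤ N`, `a_{r,0}(N+1,x) = (-1)^{N+1} · N! · r! · H_{N,r-1}`. -/
theorem aCh_r_zero (N r : ℕ) (hr1 : 2 ≤ r) (hr2 : r ≤ N) (x : ℝ) :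
    aCh (N + 1) (r : ℤ) 0 x
      = (-1 : ℝ) ^ (N + 1) * (Nat.factorial N : ℝ) * (Nat.factorial r : ℝ) *
          (genHarmonic N (r - 1) : ℝ) := by
  exact aCh_main N r (by omega) x
end
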